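/- For |x| < 1 and |y| < 1 and nonnegative integers n, m, the generating function identity Σ_{i,j≥0} s_{i+j+1-n-m}(s_{i-n} + s_{i-m} + s_{j-n} + s_{j-m} - 2) x^i y^j = (x^m y^n + x^n y^m)/((1-x)(1-y)) holds, where s_k = 1 for k ≥ 0 and s_k = 0 for k < 0. -/

import Mathlib

/-- The step function with real values: `s k = 1` for `k ≥ 0`, `s k = 0` for `k < 0`. -/
def stepFnR (k : ℤ) : ℝ := if 0 ≤ k then 1 else 0

lemma aux_summable_norm (x : ℝ) (hx : |x| < 1) (m : ℕ) :
    Summable (fun i : ℕ => ‖if m ≤ i then x ^ i else 0‖) := by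
  apply Summable.of_norm_bounded (summable_geometric_of_lt_one (abs_nonneg x) hx)
  intro i
  rcases le_or_gt m i with h | h
  · simp [h, abs_pow]
  · simp [h.not_ge, pow_nonneg (abs_nonneg x)]

lemma aux_summable (x : ℝ) (hx : |x| < 1) (m : ℕ) :
    Summable (fun i : ℕ => if m ≤ i then x ^ i else 0) :=
  (aux_summable_norm x hx m).of_norm

lemma aux_tsum (x : ℝ) (hx : |x| < 1) (m : ℕ) :
    ∑' i : ℕ, (if m ≤ i then x ^ i else 0) = x ^ m / (1 - x) := by
  have hs := aux_summable x hx m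
  rw [← Summable.sum_add_tsum_nat_add m hs]
  have h1 : ∑ i ∈ Finset.range m, (if m ≤ i then x ^ i else 0) = 0 :=
    Finset.sum_eq_zero fun i hi => by simp [Nat.not_le.2 (Finset.mem_range.1 hi)]
  have h2 : ∀ i : ℕ, (if m ≤ i + m then x ^ (i + m) else 0) = x ^ m * x ^ i := by
    intro i; rw [if_pos (Nat.le_add_left m i), pow_add]; ring
  simp only [h1, zero_add, h2]
  rw [tsum_mul_left, tsum_geometric_of_abs_lt_one hx, div_eq_mul_inv]

set_option maxHeartbeats 1000000 in
theorem stmt_13 (x y : ℝ) (hx : |x| < 1) (hy : |y| < 1) (n m : ℕ) :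
    ∑' p : ℕ × ℕ,
        stepFnR ((p.1 : ℤ) + p.2 + 1 - n - m) *
          (stepFnR ((p.1 : ℤ) - n) + stepFnR ((p.1 : ℤ) - m) +
            stepFnR ((p.2 : ℤ) - n) + stepFnR ((p.2 : ℤ) - m) - 2) *
          x ^ p.1 * y ^ p.2 =
      (x ^ m * y ^ n + x ^ n * y ^ m) / ((1 - x) * (1 - y)) := by
  have key : ∀ p : ℕ × ℕ,
      stepFnR ((p.1 : ℤ) + p.2 + 1 - n - m) *
          (stepFnR ((p.1 : ℤ) - n) + stepFnR ((p.1 : ℤ) - m) +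
            stepFnR ((p.2 : ℤ) - n) + stepFnR ((p.2 : ℤ) - m) - 2) *
          x ^ p.1 * y ^ p.2 =
      (if m ≤ p.1 then x ^ p.1 else 0) * (if n ≤ p.2 then y ^ p.2 else 0) +
      (if n ≤ p.1 then x ^ p.1 else 0) * (if m ≤ p.2 then y ^ p.2 else 0) := by
    rintro ⟨i, j⟩
    simp only [stepFnR]
    split_ifs <;> first | (exfalso; omega) | ring
  rw [tsum_congr key,
    Summable.tsum_add
      (summable_mul_of_summable_norm (aux_summable_norm x hx m) (aux_summable_norm y hy n))
      (summable_mul_of_summable_norm (aux_summable_norm x hx n) (aux_summable_norm y hy m)),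
    ← tsum_mul_tsum_of_summable_norm (aux_summable_norm x hx m) (aux_summable_norm y hy n),
    ← tsum_mul_tsum_of_summable_norm (aux_summable_norm x hx n) (aux_summable_norm y hy m),
    aux_tsum x hx m, aux_tsum x hx n, aux_tsum y hy n, aux_tsum y hy m]
  rw [div_mul_div_comm, div_mul_div_comm, ← add_div]
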